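/- Let f₄ be a symmetric 4-linear form on ℝⁿ with f₄[x,x,y,y] ≥ 0 for all x, y and f₄[x,x,x,x] > 0 for all x ≠ 0. Define Q(x) = (1/2)(f₄[x,x,x,x])^{1/2}. Then for every x ≠ 0 and every h, the second derivative of Q satisfies ∇²Q(x)[h,h] ≤ 3 (f₄[h,h,h,h])^{1/2}. -/

import Mathlib

private lemma quartic_aux_cont {n : ℕ}
    (f4 : MultilinearMap ℝ (fun _ : Fin 4 => EuclideanSpace ℝ (Fin n)) ℝ) :
    Continuous fun v : Fin 4 → EuclideanSpace ℝ (Fin n) => f4 v := by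
  set b := EuclideanSpace.basisFun (Fin n) ℝ with hb
  have hexp : ∀ v : Fin 4 → EuclideanSpace ℝ (Fin n),
      f4 v = ∑ r : Fin 4 → Fin n, (∏ i, v i (r i)) • f4 (fun i => b (r i)) := by
    intro v
    have h1 : ∀ i, v i = ∑ k, (v i k) • (b k : EuclideanSpace ℝ (Fin n)) := by
      intro i
      have := b.sum_repr (v i)
      simp only [EuclideanSpace.basisFun_repr] at this
      exact this.symm
    conv_lhs => rw [show v = fun i => ∑ k, (v i k) • (b k : EuclideanSpace ℝ (Fin n)) from
      funext h1]
    rw [f4.map_sum]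
    congr 1
    funext r
    rw [f4.map_smul_univ]
  rw [funext hexp]
  apply continuous_finset_sum
  intro r _
  refine Continuous.smul (f := fun a : Fin 4 → EuclideanSpace ℝ (Fin n) => ∏ i, (a i).ofLp (r i))
    (g := fun _ : Fin 4 → EuclideanSpace ℝ (Fin n) => f4 fun i => b (r i)) ?_
    continuous_const
  apply continuous_finset_prod
  intro i _
  exact ((EuclideanSpace.proj (r i) : EuclideanSpace ℝ (Fin n) →L[ℝ] ℝ).continuous).comp
    (continuous_apply i)

set_option maxHeartbeats 2000000 in
/-- For a positive definite, biquadratically nonnegative symmetric 4-linear form `f₄`,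
the function `Q(x) = (1/2)(f₄[x]⁴)^{1/2}` satisfies `∇²Q(x)[h,h] ≤ 3 (f₄[h]⁴)^{1/2}`
for every `x ≠ 0` and every `h`. -/
theorem quartic_norm_sq_hessian_upper {n : ℕ}
    (f4 : MultilinearMap ℝ (fun _ : Fin 4 => EuclideanSpace ℝ (Fin n)) ℝ)
    (hsymm : ∀ (v : Fin 4 → EuclideanSpace ℝ (Fin n)) (σ : Equiv.Perm (Fin 4)),
      f4 (v ∘ σ) = f4 v)
    (hpos : ∀ x y : EuclideanSpace ℝ (Fin n), 0 ≤ f4 ![x, x, y, y])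
    (hpd : ∀ x : EuclideanSpace ℝ (Fin n), x ≠ 0 → 0 < f4 ![x, x, x, x])
    (Q : EuclideanSpace ℝ (Fin n) → ℝ)
    (hQ : ∀ x, Q x = (1 / 2) * Real.sqrt (f4 ![x, x, x, x])) :
    ∀ x : EuclideanSpace ℝ (Fin n), x ≠ 0 → ∀ h : EuclideanSpace ℝ (Fin n),
      iteratedFDeriv ℝ 2 Q x ![h, h] ≤ 3 * Real.sqrt (f4 ![h, h, h, h]) := by
  intro x hx h
  -- symmetry helpers
  have fperm : ∀ (p : Fin 4 → Fin 4), Function.Bijective p → ∀ v : Fin 4 → (EuclideanSpace ℝ (Fin n)),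
      f4 (v ∘ p) = f4 v := fun p hp v => hsymm v (Equiv.ofBijective p hp)
  have hb1 : ∀ y k : (EuclideanSpace ℝ (Fin n)), f4 ![k, y, y, y] = f4 ![y, y, y, k] := by
    intro y k
    rw [show ![k,y,y,y] = ![y,y,y,k] ∘ ![3,1,2,0] from by funext j; fin_cases j <;> rfl]
    exact fperm _ (by decide) _
  have hb2 : ∀ y k : (EuclideanSpace ℝ (Fin n)), f4 ![y, k, y, y] = f4 ![y, y, y, k] := by
    intro y k
    rw [show ![y,k,y,y] = ![y,y,y,k] ∘ ![0,3,2,1] from by funext j; fin_cases j <;> rfl]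
    exact fperm _ (by decide) _
  have hb3 : ∀ y k : (EuclideanSpace ℝ (Fin n)), f4 ![y, y, k, y] = f4 ![y, y, y, k] := by
    intro y k
    rw [show ![y,y,k,y] = ![y,y,y,k] ∘ ![0,1,3,2] from by funext j; fin_cases j <;> rfl]
    exact fperm _ (by decide) _
  have hc1 : ∀ y k : (EuclideanSpace ℝ (Fin n)), f4 ![k, k, y, y] = f4 ![y, y, k, k] := by
    intro y k
    rw [show ![k,k,y,y] = ![y,y,k,k] ∘ ![2,3,0,1] from by funext j; fin_cases j <;> rfl]
    exact fperm _ (by decide) _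
  have hc2 : ∀ y k : (EuclideanSpace ℝ (Fin n)), f4 ![k, y, k, y] = f4 ![y, y, k, k] := by
    intro y k
    rw [show ![k,y,k,y] = ![y,y,k,k] ∘ ![2,0,3,1] from by funext j; fin_cases j <;> rfl]
    exact fperm _ (by decide) _
  have hc3 : ∀ y k : (EuclideanSpace ℝ (Fin n)), f4 ![k, y, y, k] = f4 ![y, y, k, k] := by
    intro y k
    rw [show ![k,y,y,k] = ![y,y,k,k] ∘ ![2,0,1,3] from by funext j; fin_cases j <;> rfl]
    exact fperm _ (by decide) _
  have hc4 : ∀ y k : (EuclideanSpace ℝ (Fin n)), f4 ![y, k, k, y] = f4 ![y, y, k, k] := by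
    intro y k
    rw [show ![y,k,k,y] = ![y,y,k,k] ∘ ![0,2,3,1] from by funext j; fin_cases j <;> rfl]
    exact fperm _ (by decide) _
  have hc5 : ∀ y k : (EuclideanSpace ℝ (Fin n)), f4 ![y, k, y, k] = f4 ![y, y, k, k] := by
    intro y k
    rw [show ![y,k,y,k] = ![y,y,k,k] ∘ ![0,2,1,3] from by funext j; fin_cases j <;> rfl]
    exact fperm _ (by decide) _
  have he1 : ∀ y k : (EuclideanSpace ℝ (Fin n)), f4 ![k, y, k, k] = f4 ![y, k, k, k] := by
    intro y k
    rw [show ![k,y,k,k] = ![y,k,k,k] ∘ ![1,0,2,3] from by funext j; fin_cases j <;> rfl]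
    exact fperm _ (by decide) _
  have he2 : ∀ y k : (EuclideanSpace ℝ (Fin n)), f4 ![k, k, y, k] = f4 ![y, k, k, k] := by
    intro y k
    rw [show ![k,k,y,k] = ![y,k,k,k] ∘ ![1,2,0,3] from by funext j; fin_cases j <;> rfl]
    exact fperm _ (by decide) _
  have he3 : ∀ y k : (EuclideanSpace ℝ (Fin n)), f4 ![k, k, k, y] = f4 ![y, k, k, k] := by
    intro y k
    rw [show ![k,k,k,y] = ![y,k,k,k] ∘ ![1,2,3,0] from by funext j; fin_cases j <;> rfl]
    exact fperm _ (by decide) _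
  -- multilinearity expansion helpers
  have hu0 : ∀ (z w a b c : (EuclideanSpace ℝ (Fin n))), Function.update ![w,a,b,c] 0 z = ![z,a,b,c] := by
    intro z w a b c; funext j; fin_cases j <;> simp [Function.update]
  have hu1 : ∀ (z w a b c : (EuclideanSpace ℝ (Fin n))), Function.update ![a,w,b,c] 1 z = ![a,z,b,c] := by
    intro z w a b c; funext j; fin_cases j <;> simp [Function.update]
  have hu2 : ∀ (z w a b c : (EuclideanSpace ℝ (Fin n))), Function.update ![a,b,w,c] 2 z = ![a,b,z,c] := by
    intro z w a b c; funext j; fin_cases j <;> simp [Function.update]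
  have hu3 : ∀ (z w a b c : (EuclideanSpace ℝ (Fin n))), Function.update ![a,b,c,w] 3 z = ![a,b,c,z] := by
    intro z w a b c; funext j; fin_cases j <;> simp [Function.update]
  have hadd0 : ∀ (z w a b c : (EuclideanSpace ℝ (Fin n))), f4 ![z+w,a,b,c] = f4 ![z,a,b,c] + f4 ![w,a,b,c] := by
    intro z w a b c
    have := f4.map_update_add ![z,a,b,c] 0 z w
    rwa [hu0, hu0, hu0] at this
  have hadd1 : ∀ (z w a b c : (EuclideanSpace ℝ (Fin n))), f4 ![a,z+w,b,c] = f4 ![a,z,b,c] + f4 ![a,w,b,c] := by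
    intro z w a b c
    have := f4.map_update_add ![a,z,b,c] 1 z w
    rwa [hu1, hu1, hu1] at this
  have hadd2 : ∀ (z w a b c : (EuclideanSpace ℝ (Fin n))), f4 ![a,b,z+w,c] = f4 ![a,b,z,c] + f4 ![a,b,w,c] := by
    intro z w a b c
    have := f4.map_update_add ![a,b,z,c] 2 z w
    rwa [hu2, hu2, hu2] at this
  have hadd3 : ∀ (z w a b c : (EuclideanSpace ℝ (Fin n))), f4 ![a,b,c,z+w] = f4 ![a,b,c,z] + f4 ![a,b,c,w] := by
    intro z w a b c
    have := f4.map_update_add ![a,b,c,z] 3 z w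
    rwa [hu3, hu3, hu3] at this
  have hsm0 : ∀ (r : ℝ) (z a b c : (EuclideanSpace ℝ (Fin n))), f4 ![r • z,a,b,c] = r * f4 ![z,a,b,c] := by
    intro r z a b c
    have := f4.map_update_smul ![z,a,b,c] 0 r z
    rwa [hu0, hu0] at this
  have hsm1 : ∀ (r : ℝ) (z a b c : (EuclideanSpace ℝ (Fin n))), f4 ![a,r • z,b,c] = r * f4 ![a,z,b,c] := by
    intro r z a b c
    have := f4.map_update_smul ![a,z,b,c] 1 r z
    rwa [hu1, hu1] at this
  have hsm2 : ∀ (r : ℝ) (z a b c : (EuclideanSpace ℝ (Fin n))), f4 ![a,b,r • z,c] = r * f4 ![a,b,z,c] := by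
    intro r z a b c
    have := f4.map_update_smul ![a,b,z,c] 2 r z
    rwa [hu2, hu2] at this
  have hsm3 : ∀ (r : ℝ) (z a b c : (EuclideanSpace ℝ (Fin n))), f4 ![a,b,c,r • z] = r * f4 ![a,b,c,z] := by
    intro r z a b c
    have := f4.map_update_smul ![a,b,c,z] 3 r z
    rwa [hu3, hu3] at this
  -- scalar abbreviations
  set a : ℝ := f4 ![x,x,x,x] with ha_def
  set bb : ℝ := f4 ![x,x,x,h] with hbb_def
  set cv : ℝ := f4 ![x,x,h,h] with hcv_def
  set dd : ℝ := f4 ![h,h,h,h] with hdd_def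
  have ha : 0 < a := hpd x hx
  have hd0 : 0 ≤ dd := hpos h h
  set u : ℝ := Real.sqrt a with hu_def
  set v : ℝ := Real.sqrt dd with hv_def
  have hu : 0 < u := Real.sqrt_pos.2 ha
  have hv0 : 0 ≤ v := Real.sqrt_nonneg _
  have huu : u * u = a := Real.mul_self_sqrt ha.le
  have hvv : v * v = dd := Real.mul_self_sqrt hd0
  -- quartic inequality along the segment
  have hquart : ∀ τ : ℝ, 0 ≤ τ → 0 ≤ a - 2*cv*τ + dd*τ^2 := by
    intro τ hτ
    set t : ℝ := Real.sqrt τ with ht_def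
    have ht2 : t^2 = τ := Real.sq_sqrt hτ
    have H := hpos (x + t • h) (x + (-t) • h)
    have hexp : f4 ![x + t • h, x + t • h, x + (-t) • h, x + (-t) • h]
        = a - 2*cv*t^2 + dd*(t^2)^2 := by
      simp only [hadd0, hadd1, hadd2, hadd3, hsm0, hsm1, hsm2, hsm3,
        hb1, hb2, hb3, hc1, hc2, hc3, hc4, hc5, he1, he2, he3,
        ← ha_def, ← hbb_def, ← hcv_def, ← hdd_def]
      ring
    rw [hexp, ht2] at H
    linarith [H]
  -- Cauchy–Schwarz: cv ≤ u * v
  have hkey : cv ≤ u * v := by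
    rcases le_or_gt cv 0 with hcv | hcv
    · exact hcv.trans (by positivity)
    · rcases eq_or_lt_of_le hd0 with hdz | hdz
      · exfalso
        have hq := hquart (a / cv) (by positivity)
        rw [← hdz] at hq
        have : cv * (a / cv) = a := mul_div_cancel₀ a hcv.ne'
        nlinarith [this, hq, ha]
      · have hvpos : 0 < v := Real.sqrt_pos.2 hdz
        have hq := hquart (u / v) (by positivity)
        have h5 : (a - 2*cv*(u/v) + dd*(u/v)^2) * v^2 = a*v^2 - 2*cv*(u*v) + dd*u^2 := by
          field_simp
        have h6 : 0 ≤ a*v^2 - 2*cv*(u*v) + dd*u^2 := by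
          rw [← h5]
          exact mul_nonneg hq (sq_nonneg v)
        have h7 : a*v^2 = (u*v)*(u*v) := by rw [← huu]; ring
        have h8 : dd*u^2 = (u*v)*(u*v) := by rw [← hvv]; ring
        nlinarith [h6, h7, h8, mul_pos hu hvpos]
  -- analytic setup
  let F : ContinuousMultilinearMap ℝ (fun _ : Fin 4 => EuclideanSpace ℝ (Fin n)) ℝ := ⟨f4, quartic_aux_cont f4⟩
  have hFapp : ∀ w : Fin 4 → (EuclideanSpace ℝ (Fin n)), F w = f4 w := fun _ => rfl
  have hvec : ∀ y : (EuclideanSpace ℝ (Fin n)), (fun _ : Fin 4 => y) = ![y,y,y,y] := by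
    intro y; funext j; fin_cases j <;> rfl
  set g : (EuclideanSpace ℝ (Fin n)) → ℝ := fun y => F (fun _ => y) with hg
  have hgval : ∀ y : (EuclideanSpace ℝ (Fin n)), g y = f4 ![y,y,y,y] := by
    intro y; rw [hg]; simp only [hFapp, hvec]
  set Dg : (EuclideanSpace ℝ (Fin n)) → ((EuclideanSpace ℝ (Fin n)) →L[ℝ] ℝ) := fun y =>
    ∑ i : Fin 4, (F.toContinuousLinearMap (fun _ => y) i) ∘L (ContinuousLinearMap.id ℝ (EuclideanSpace ℝ (Fin n)))
    with hDg
  have hgderiv : ∀ y : (EuclideanSpace ℝ (Fin n)), HasFDerivAt g (Dg y) y := fun y =>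
    HasFDerivAt.multilinear_comp F (fun i => hasFDerivAt_id y)
      (g' := fun _ => ContinuousLinearMap.id ℝ (EuclideanSpace ℝ (Fin n)))
  have hDgapp : ∀ y k : (EuclideanSpace ℝ (Fin n)), Dg y k = 4 * f4 ![y,y,y,k] := by
    intro y k
    rw [hDg]
    simp only [ContinuousLinearMap.sum_apply, ContinuousLinearMap.comp_apply,
      ContinuousLinearMap.id_apply, ContinuousMultilinearMap.toContinuousLinearMap,
      ContinuousLinearMap.coe_mk', LinearMap.coe_mk, AddHom.coe_mk,
      MultilinearMap.toLinearMap_apply]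
    have e0 : Function.update (fun _ : Fin 4 => y) 0 k = ![k,y,y,y] := by
      funext j; fin_cases j <;> simp [Function.update]
    have e1 : Function.update (fun _ : Fin 4 => y) 1 k = ![y,k,y,y] := by
      funext j; fin_cases j <;> simp [Function.update]
    have e2 : Function.update (fun _ : Fin 4 => y) 2 k = ![y,y,k,y] := by
      funext j; fin_cases j <;> simp [Function.update]
    have e3 : Function.update (fun _ : Fin 4 => y) 3 k = ![y,y,y,k] := by
      funext j; fin_cases j <;> simp [Function.update]
    rw [Fin.sum_univ_four]
    simp only [e0, e1, e2, e3]
    linarith [hb1 y k, hb2 y k, hb3 y k]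
  -- curried map and its derivative
  set C := F.curryRight with hC
  have hCapp : ∀ (m : Fin 3 → (EuclideanSpace ℝ (Fin n))) (k : (EuclideanSpace ℝ (Fin n))), C m k = f4 (Fin.snoc m k) :=
    fun m k => F.curryRight_apply m k
  set M : (EuclideanSpace ℝ (Fin n)) → ((EuclideanSpace ℝ (Fin n)) →L[ℝ] ℝ) := fun y => C (fun _ => y) with hM
  set DM : (EuclideanSpace ℝ (Fin n)) → ((EuclideanSpace ℝ (Fin n)) →L[ℝ] ((EuclideanSpace ℝ (Fin n)) →L[ℝ] ℝ)) := fun y =>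
    ∑ i : Fin 3, (C.toContinuousLinearMap (fun _ => y) i) ∘L (ContinuousLinearMap.id ℝ (EuclideanSpace ℝ (Fin n)))
    with hDM
  have hMderiv : ∀ y : (EuclideanSpace ℝ (Fin n)), HasFDerivAt M (DM y) y := fun y =>
    HasFDerivAt.multilinear_comp C (fun i => hasFDerivAt_id y)
      (g' := fun _ => ContinuousLinearMap.id ℝ (EuclideanSpace ℝ (Fin n)))
  have hsnoc : ∀ (y k : (EuclideanSpace ℝ (Fin n))), (Fin.snoc (fun _ : Fin 3 => y) k : Fin 4 → (EuclideanSpace ℝ (Fin n))) = ![y,y,y,k] := by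
    intro y k; funext j; fin_cases j <;> simp [Fin.snoc]
  have hMapp : ∀ y k : (EuclideanSpace ℝ (Fin n)), M y k = f4 ![y,y,y,k] := by
    intro y k
    rw [hM]
    rw [hCapp, hsnoc]
  have hDMapp : DM x h h = 3 * cv := by
    rw [hDM]
    simp only [ContinuousLinearMap.sum_apply, ContinuousLinearMap.comp_apply,
      ContinuousLinearMap.id_apply, ContinuousMultilinearMap.toContinuousLinearMap,
      ContinuousLinearMap.coe_mk', LinearMap.coe_mk, AddHom.coe_mk,
      MultilinearMap.toLinearMap_apply, ContinuousMultilinearMap.coe_coe]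
    rw [Fin.sum_univ_three]
    have e0 : (Fin.snoc (Function.update (fun _ : Fin 3 => x) 0 h) h : Fin 4 → (EuclideanSpace ℝ (Fin n)))
        = ![h,x,x,h] := by
      funext j; fin_cases j <;> rfl
    have e1 : (Fin.snoc (Function.update (fun _ : Fin 3 => x) 1 h) h : Fin 4 → (EuclideanSpace ℝ (Fin n)))
        = ![x,h,x,h] := by
      funext j; fin_cases j <;> rfl
    have e2 : (Fin.snoc (Function.update (fun _ : Fin 3 => x) 2 h) h : Fin 4 → (EuclideanSpace ℝ (Fin n)))
        = ![x,x,h,h] := by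
      funext j; fin_cases j <;> rfl
    have k0 : C (Function.update (fun _ : Fin 3 => x) 0 h) h = f4 ![h,x,x,h] := by
      rw [hCapp, e0]
    have k1 : C (Function.update (fun _ : Fin 3 => x) 1 h) h = f4 ![x,h,x,h] := by
      rw [hCapp, e1]
    have k2 : C (Function.update (fun _ : Fin 3 => x) 2 h) h = f4 ![x,x,h,h] := by
      rw [hCapp, e2]
    rw [k0, k1, k2, hc3 x h, hc5 x h]
    rw [← hcv_def]
    ring
  -- first derivative of Q
  set Φ : (EuclideanSpace ℝ (Fin n)) → ((EuclideanSpace ℝ (Fin n)) →L[ℝ] ℝ) := fun y => (Real.sqrt (g y))⁻¹ • M y with hΦ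
  have hQfun : Q = fun y => (1/2) * Real.sqrt (g y) := by
    funext y; rw [hQ y, hgval y]
  have hQderiv : ∀ y : (EuclideanSpace ℝ (Fin n)), y ≠ 0 → HasFDerivAt Q (Φ y) y := by
    intro y hy
    have hgy : 0 < g y := by rw [hgval]; exact hpd y hy
    have hs : HasFDerivAt (fun z => Real.sqrt (g z)) ((1/(2*Real.sqrt (g y))) • Dg y) y :=
      (hgderiv y).sqrt hgy.ne'
    have hQd : HasFDerivAt Q ((1/2 : ℝ) • ((1/(2*Real.sqrt (g y))) • Dg y)) y := by
      rw [hQfun]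
      exact hs.const_mul (1/2)
    have heq : ((1/2 : ℝ) • ((1/(2*Real.sqrt (g y))) • Dg y)) = Φ y := by
      ext k
      simp only [ContinuousLinearMap.smul_apply, smul_eq_mul, hΦ]
      rw [hDgapp, hMapp]
      have hsy : Real.sqrt (g y) ≠ 0 := (Real.sqrt_pos.2 hgy).ne'
      field_simp
      ring
    rw [← heq]
    exact hQd
  -- second derivative at x
  have hgx : g x = a := by rw [hgval, ha_def]
  have hgxpos : 0 < g x := by rw [hgx]; exact ha
  have hsx : HasFDerivAt (fun z => Real.sqrt (g z)) ((1/(2*Real.sqrt (g x))) • Dg x) x :=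
    (hgderiv x).sqrt hgxpos.ne'
  have hsqx : Real.sqrt (g x) ≠ 0 := (Real.sqrt_pos.2 hgxpos).ne'
  have hcinv : HasFDerivAt (fun y => (Real.sqrt (g y))⁻¹)
      ((-(Real.sqrt (g x) ^ 2)⁻¹) • ((1/(2*Real.sqrt (g x))) • Dg x)) x :=
    (hasDerivAt_inv hsqx).comp_hasFDerivAt x hsx
  set Ψ : (EuclideanSpace ℝ (Fin n)) →L[ℝ] ((EuclideanSpace ℝ (Fin n)) →L[ℝ] ℝ) :=
    (Real.sqrt (g x))⁻¹ • DM x +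
      ((-(Real.sqrt (g x) ^ 2)⁻¹) • ((1/(2*Real.sqrt (g x))) • Dg x)).smulRight (M x) with hΨ
  have hΦderiv : HasFDerivAt Φ Ψ x := by
    rw [hΦ, hΨ]
    exact hcinv.smul (hMderiv x)
  -- identify the iterated derivative
  have hnhds : {y : (EuclideanSpace ℝ (Fin n)) | y ≠ 0} ∈ nhds x := by
    have : {y : (EuclideanSpace ℝ (Fin n)) | y ≠ 0} = {(0 : (EuclideanSpace ℝ (Fin n)))}ᶜ := by ext y; simp
    rw [this]
    exact isOpen_compl_singleton.mem_nhds (by simpa using hx)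
  have hev : fderiv ℝ Q =ᶠ[nhds x] Φ := by
    filter_upwards [hnhds] with y hy
    exact (hQderiv y hy).fderiv
  have h2 : iteratedFDeriv ℝ 2 Q x ![h, h] = Ψ h h := by
    rw [iteratedFDeriv_two_apply]
    simp only [Matrix.cons_val_zero, Matrix.cons_val_one, Matrix.head_cons]
    rw [hev.fderiv_eq, hΦderiv.fderiv]
  -- evaluate
  have hΨval : Ψ h h = u⁻¹ * (3*cv) + (-(a⁻¹) * (1/(2*u) * (4*bb))) * bb := by
    rw [hΨ]
    simp only [ContinuousLinearMap.add_apply, ContinuousLinearMap.smul_apply,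
      ContinuousLinearMap.smulRight_apply, smul_eq_mul]
    rw [hDMapp, hDgapp, hMapp, hgx, ← hbb_def, Real.sq_sqrt ha.le, ← hu_def]
  rw [h2, hΨval]
  have hterm2 : (-(a⁻¹) * (1/(2*u) * (4*bb))) * bb = -((2/(a*u)) * bb^2) := by ring
  have hterm2le : (-(a⁻¹) * (1/(2*u) * (4*bb))) * bb ≤ 0 := by
    rw [hterm2]
    have : 0 ≤ (2/(a*u)) * bb^2 := by positivity
    linarith
  have hterm1 : u⁻¹ * (3*cv) ≤ 3 * v := by
    rw [inv_mul_le_iff₀ hu]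
    nlinarith [hkey]
  linarith
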